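/- Let β ≤ 0, θ > 0, x₀ ≥ 0, and let (y, ψ) be a pair of continuous functions on [0,∞) with y ≥ 0, ψ(0) = 0, ψ nondecreasing, y(t) = x₀ - βt - (θ²/2)∫₀ᵗ y(s)² ds + ψ(t) for all t, and ∫₀ᵗ 1{y(s) > 0} dψ(s) = 0 for all t. Then ψ ≡ 0 and y equals the unique solution x_F of the IVP x' = -β - (θ²/2)x², x(0) = x₀. -/

import Mathlib

set_option maxHeartbeats 1000000

open MeasureTheory Set

lemma psi_vanishes (β θ x₀ : ℝ) (hβ : β ≤ 0) (hθ : 0 < θ)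
    (hx₀ : 0 ≤ x₀) (y : ℝ → ℝ) (ψ : StieltjesFunction ℝ)
    (hy_cont : Continuous y) (hψ_cont : Continuous ψ)
    (hy_nonneg : ∀ t : ℝ, 0 ≤ t → 0 ≤ y t)
    (hψ0 : ψ 0 = 0)
    (heq : ∀ t : ℝ, 0 ≤ t →
      y t = x₀ - β * t - θ ^ 2 / 2 * (∫ s in (0 : ℝ)..t, (y s) ^ 2) + ψ t)
    (hflat : ∀ t : ℝ, 0 ≤ t →
      ψ.measure {s | s ∈ Set.Icc (0 : ℝ) t ∧ 0 < y s} = 0) :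
    ∀ t : ℝ, 0 ≤ t → ψ t = 0 := by
  set c : ℝ := θ ^ 2 / 2 with hc_def
  have hc : 0 < c := by positivity
  have hψ_nonneg : ∀ t : ℝ, 0 ≤ t → 0 ≤ ψ t := fun t ht => hψ0 ▸ ψ.mono ht
  have hint : ∀ a b : ℝ, IntervalIntegrable (fun s => (y s) ^ 2) volume a b :=
    fun a b => (hy_cont.pow 2).intervalIntegrable a b
  -- ψ is constant across intervals where y > 0
  have hconst : ∀ a b : ℝ, 0 ≤ a → a ≤ b → (∀ u ∈ Set.Ioc a b, 0 < y u) → ψ b = ψ a := by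
    intro a b ha hab hpos
    have hsub : Set.Ioc a b ⊆ {s | s ∈ Set.Icc (0 : ℝ) b ∧ 0 < y s} := by
      intro u hu
      exact ⟨⟨le_trans ha hu.1.le, hu.2⟩, hpos u hu⟩
    have h0 : ψ.measure (Set.Ioc a b) = 0 :=
      le_antisymm (le_trans (measure_mono hsub) (hflat b (le_trans ha hab)).le) zero_le
    rw [ψ.measure_Ioc, ENNReal.ofReal_eq_zero] at h0
    exact le_antisymm (by linarith) (ψ.mono hab)
  intro T hT
  by_contra hψT
  have hψTpos : 0 < ψ T := lt_of_le_of_ne (hψ_nonneg T hT) (Ne.symm hψT)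
  -- last time ψ is zero
  set Z : Set ℝ := Set.Icc 0 T ∩ {t | ψ t = 0} with hZ_def
  have hZcomp : IsCompact Z :=
    isCompact_Icc.inter_right (isClosed_singleton.preimage hψ_cont)
  have hZne : Z.Nonempty := ⟨0, ⟨le_refl _, hT⟩, hψ0⟩
  set t₀ : ℝ := sSup Z with ht₀_def
  have ht₀Z : t₀ ∈ Z := hZcomp.sSup_mem hZne
  have ht₀0 : 0 ≤ t₀ := ht₀Z.1.1
  have hψt₀ : ψ t₀ = 0 := ht₀Z.2
  have ht₀T : t₀ < T := lt_of_le_of_ne ht₀Z.1.2 (fun h => hψT (h ▸ hψt₀))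
  have hbdd : BddAbove Z := hZcomp.bddAbove
  have hpos : ∀ t : ℝ, t₀ < t → t ≤ T → 0 < ψ t := by
    intro t h1 h2
    rcases lt_or_eq_of_le (hψ_nonneg t (le_trans ht₀0 h1.le)) with h | h
    · exact h
    · exact absurd (le_csSup hbdd ⟨⟨le_trans ht₀0 h1.le, h2⟩, h.symm⟩) (not_le_of_gt h1)
  -- y t₀ = 0
  have hyt₀ : y t₀ = 0 := by
    by_contra hy0
    have hy0' : 0 < y t₀ := lt_of_le_of_ne (hy_nonneg t₀ ht₀0) (Ne.symm hy0)
    have : {u : ℝ | 0 < y u} ∈ nhds t₀ :=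
      (isOpen_lt continuous_const hy_cont).mem_nhds hy0'
    rcases Metric.mem_nhds_iff.mp this with ⟨δ, hδ, hball⟩
    set t₂ : ℝ := min T (t₀ + δ / 2) with ht₂_def
    have ht₀t₂ : t₀ < t₂ := lt_min ht₀T (by linarith)
    have h02 : ψ t₂ = ψ t₀ := by
      apply hconst t₀ t₂ ht₀0 ht₀t₂.le
      intro u hu
      apply hball
      have h1 : u ≤ t₀ + δ / 2 := le_trans hu.2 (min_le_right _ _)
      simp only [Metric.mem_ball, Real.dist_eq, abs_lt]
      constructor <;> [linarith [hu.1]; linarith [hu.1]]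
    have := hpos t₂ ht₀t₂ (min_le_left _ _)
    rw [h02, hψt₀] at this
    exact lt_irrefl _ this
  -- the equation starting from t₀
  have heq' : ∀ t : ℝ, t₀ ≤ t →
      y t = -β * (t - t₀) - c * (∫ s in t₀..t, (y s) ^ 2) + ψ t := by
    intro t ht
    have h1 := heq t (le_trans ht₀0 ht)
    have h2 := heq t₀ ht₀0
    have hsplit : (∫ s in (0:ℝ)..t, (y s) ^ 2)
        = (∫ s in (0:ℝ)..t₀, (y s) ^ 2) + ∫ s in t₀..t, (y s) ^ 2 :=
      (intervalIntegral.integral_add_adjacent_intervals (hint 0 t₀) (hint t₀ t)).symm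
    rw [hsplit] at h1
    rw [hψt₀] at h2
    rw [hyt₀] at h2
    have : y t = x₀ - β * t - c * ((∫ s in (0:ℝ)..t₀, (y s) ^ 2)
        + ∫ s in t₀..t, (y s) ^ 2) + ψ t := h1
    have h2' : (0:ℝ) = x₀ - β * t₀ - c * (∫ s in (0:ℝ)..t₀, (y s) ^ 2) := by linarith
    nlinarith [this, h2']
  -- existence of a "last zero" representation
  have hσ : ∀ s : ℝ, t₀ < s → s ≤ T →
      ∃ σ : ℝ, t₀ < σ ∧ σ ≤ s ∧ ψ s = β * (σ - t₀) + c * ∫ u in t₀..σ, (y u) ^ 2 := by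
    intro s hs hsT
    set W : Set ℝ := Set.Icc t₀ s ∩ {u | y u = 0} with hW_def
    have hWcomp : IsCompact W :=
      isCompact_Icc.inter_right (isClosed_singleton.preimage hy_cont)
    have hWne : W.Nonempty := ⟨t₀, ⟨le_refl _, hs.le⟩, hyt₀⟩
    set σ : ℝ := sSup W with hσ_def
    have hσW : σ ∈ W := hWcomp.sSup_mem hWne
    have hσ1 : t₀ ≤ σ := hσW.1.1
    have hσ2 : σ ≤ s := hσW.1.2
    have hyσ : y σ = 0 := hσW.2
    have hψsσ : ψ s = ψ σ := by
      apply hconst σ s (le_trans ht₀0 hσ1) hσ2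
      intro u hu
      rcases lt_or_eq_of_le (hy_nonneg u (le_trans ht₀0 (le_trans hσ1 hu.1.le))) with h | h
      · exact h
      · exact absurd (le_csSup hWcomp.bddAbove
          ⟨⟨le_trans hσ1 hu.1.le, hu.2⟩, h.symm⟩) (not_le_of_gt hu.1)
    have hσt₀ : t₀ < σ := by
      rcases lt_or_eq_of_le hσ1 with h | h
      · exact h
      · exfalso
        have := hpos s hs hsT
        rw [hψsσ, ← h, hψt₀] at this
        exact lt_irrefl _ this
    refine ⟨σ, hσt₀, hσ2, ?_⟩
    have := heq' σ hσ1
    rw [hyσ] at this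
    rw [hψsσ]
    linarith
  -- ψ s ≤ c ∫
  have hbound : ∀ s : ℝ, t₀ < s → s ≤ T → ψ s ≤ c * ∫ u in t₀..s, (y u) ^ 2 := by
    intro s hs hsT
    obtain ⟨σ, h1, h2, h3⟩ := hσ s hs hsT
    have hmono : (∫ u in t₀..σ, (y u) ^ 2) ≤ ∫ u in t₀..s, (y u) ^ 2 := by
      have hsplit : (∫ u in t₀..s, (y u) ^ 2)
          = (∫ u in t₀..σ, (y u) ^ 2) + ∫ u in σ..s, (y u) ^ 2 :=
        (intervalIntegral.integral_add_adjacent_intervals (hint t₀ σ) (hint σ s)).symm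
      have hnn : 0 ≤ ∫ u in σ..s, (y u) ^ 2 :=
        intervalIntegral.integral_nonneg h2 (fun u _ => sq_nonneg _)
      linarith
    have hle := mul_le_mul_of_nonneg_left hmono hc.le
    nlinarith [mul_nonneg (neg_nonneg.mpr hβ) (sub_nonneg.mpr h1.le)]
  -- y s ≤ -β (s - t₀) on (t₀, T]
  have hy_lin : ∀ s : ℝ, t₀ ≤ s → s ≤ T → y s ≤ -β * (s - t₀) := by
    intro s hs hsT
    rcases eq_or_lt_of_le hs with h | h
    · rw [← h, hyt₀]; simp
    · have := heq' s hs
      have hb := hbound s h hsT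
      linarith
  -- choose ε
  obtain ⟨ε, hε, hεprop⟩ : ∃ ε : ℝ, 0 < ε ∧
      ∀ δ : ℝ, 0 < δ → δ ≤ ε → β * δ + c * (β ^ 2 * δ ^ 3 / 3) ≤ 0 := by
    rcases eq_or_lt_of_le hβ with hβ0 | hβ0
    · refine ⟨1, one_pos, fun δ h1 h2 => ?_⟩
      rw [hβ0]
      norm_num
    · have hnb : 0 < -β := neg_pos.mpr hβ0
      have hcb : 0 < c * (-β) := mul_pos hc hnb
      have hd : 0 < 3 / (c * (-β)) := div_pos three_pos hcb
      refine ⟨Real.sqrt (3 / (c * (-β))), Real.sqrt_pos.mpr hd, ?_⟩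
      intro δ h1 h2
      have hε2 : δ ^ 2 ≤ 3 / (c * (-β)) := by
        have hs := Real.sq_sqrt hd.le
        nlinarith
      have h3 : c * -β * δ ^ 2 ≤ 3 := by
        rw [le_div_iff₀ hcb] at hε2
        nlinarith
      have hnbd : 0 ≤ -β * δ := by nlinarith
      have h4 : c * -β * δ ^ 2 * (-β * δ) ≤ 3 * (-β * δ) :=
        mul_le_mul_of_nonneg_right h3 hnbd
      have h5 : c * β ^ 2 * δ ^ 3 = c * -β * δ ^ 2 * (-β * δ) := by ring
      nlinarith
  set t₁ : ℝ := min T (t₀ + ε) with ht₁_def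
  have ht₀t₁ : t₀ < t₁ := lt_min ht₀T (by linarith)
  have ht₁T : t₁ ≤ T := min_le_left _ _
  obtain ⟨σ, h1, h2, h3⟩ := hσ t₁ ht₀t₁ ht₁T
  set δ : ℝ := σ - t₀ with hδ_def
  have hδpos : 0 < δ := by simp [hδ_def]; linarith
  have hδε : δ ≤ ε := by
    have : σ ≤ t₀ + ε := le_trans h2 (min_le_right _ _)
    simp [hδ_def]; linarith
  -- bound the integral
  have hintb : (∫ u in t₀..σ, (y u) ^ 2) ≤ β ^ 2 * δ ^ 3 / 3 := by
    have hptw : ∀ u ∈ Set.Icc t₀ σ, (y u) ^ 2 ≤ β ^ 2 * (u - t₀) ^ 2 := by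
      intro u hu
      have hl := hy_lin u hu.1 (le_trans hu.2 (le_trans h2 ht₁T))
      have hn := hy_nonneg u (le_trans ht₀0 hu.1)
      nlinarith
    have hm : (∫ u in t₀..σ, (y u) ^ 2) ≤ ∫ u in t₀..σ, β ^ 2 * (u - t₀) ^ 2 := by
      apply intervalIntegral.integral_mono_on (by linarith) (hint t₀ σ)
      · exact ((continuous_const.mul
          (((continuous_id.sub continuous_const).pow 2))).intervalIntegrable t₀ σ)
      · exact hptw
    have hcomp : (∫ u in t₀..σ, β ^ 2 * (u - t₀) ^ 2) = β ^ 2 * δ ^ 3 / 3 := by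
      rw [intervalIntegral.integral_const_mul]
      rw [intervalIntegral.integral_comp_sub_right (fun x => x ^ 2) t₀]
      rw [integral_pow]
      simp [hδ_def]
      ring
    linarith
  have hfinal : 0 < ψ t₁ := hpos t₁ ht₀t₁ ht₁T
  have : ψ t₁ ≤ β * δ + c * (β ^ 2 * δ ^ 3 / 3) := by
    rw [h3]
    have : c * (∫ u in t₀..σ, (y u) ^ 2) ≤ c * (β ^ 2 * δ ^ 3 / 3) :=
      mul_le_mul_of_nonneg_left hintb hc.le
    simp only [hδ_def]
    linarith
  have := hεprop δ hδpos hδε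
  linarith


lemma ode_part (β θ x₀ : ℝ) (hθ : 0 < θ) (y : ℝ → ℝ)
    (hy_cont : Continuous y)
    (heq : ∀ t : ℝ, 0 ≤ t →
      y t = x₀ - β * t - θ ^ 2 / 2 * (∫ s in (0 : ℝ)..t, (y s) ^ 2)) :
    ∀ x : ℝ → ℝ,
      (x 0 = x₀ ∧
        ∀ t ∈ Set.Ici (0 : ℝ),
          HasDerivWithinAt x (-β - θ ^ 2 / 2 * (x t) ^ 2) (Set.Ici 0) t) →
      Set.EqOn y x (Set.Ici 0) := by
  set c : ℝ := θ ^ 2 / 2 with hc_def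
  have hc : 0 < c := by positivity
  rintro x ⟨hx0, hx'⟩ t ht
  simp only [Set.mem_Ici] at ht
  -- continuity of x on [0, t]
  have hx_cont : ContinuousOn x (Set.Icc 0 t) := fun u hu =>
    ((hx' u hu.1).continuousWithinAt).mono (fun v hv => hv.1)
  -- bounds
  obtain ⟨Ry, hRy⟩ := isCompact_Icc.exists_bound_of_continuousOn
    (hy_cont.continuousOn : ContinuousOn y (Set.Icc 0 t))
  obtain ⟨Rx, hRx⟩ := isCompact_Icc.exists_bound_of_continuousOn hx_cont
  set R : ℝ := max Ry Rx with hR_def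
  have hR0 : 0 ≤ R :=
    le_trans (norm_nonneg (y 0)) (le_trans (hRy 0 ⟨le_refl _, ht⟩) (le_max_left _ _))
  set v : ℝ → ℝ → ℝ := fun _ w => -β - c * w ^ 2 with hv_def
  set K : NNReal := Real.toNNReal (2 * c * R) with hK_def
  have hKcoe : (K : ℝ) = 2 * c * R := Real.coe_toNNReal _ (by positivity)
  have hv : ∀ u : ℝ, LipschitzOnWith K (v u) (Metric.closedBall (0:ℝ) R) := by
    intro u
    apply LipschitzOnWith.of_dist_le_mul
    intro p hp q hq
    rw [mem_closedBall_zero_iff, Real.norm_eq_abs] at hp hq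
    rw [Real.dist_eq, Real.dist_eq, hKcoe]
    have e : v u p - v u q = c * ((q - p) * (q + p)) := by simp only [hv_def]; ring
    rw [e, abs_mul, abs_mul, abs_of_pos hc]
    have h1 : |q + p| ≤ 2 * R := le_trans (abs_add_le _ _) (by linarith)
    have h2 : |q - p| = |p - q| := abs_sub_comm _ _
    rw [h2]
    have h3 : (0:ℝ) ≤ |p - q| := abs_nonneg _
    have h4 := mul_le_mul_of_nonneg_left
      (mul_le_mul_of_nonneg_left h1 h3) hc.le
    have h5 : c * (|p - q| * (2 * R)) = 2 * c * R * |p - q| := by ring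
    linarith
  have hmemy : ∀ u ∈ Set.Icc (0:ℝ) t, y u ∈ Metric.closedBall (0:ℝ) R := fun u hu =>
    mem_closedBall_zero_iff.mpr (le_trans (hRy u hu) (le_max_left _ _))
  have hmemx : ∀ u ∈ Set.Icc (0:ℝ) t, x u ∈ Metric.closedBall (0:ℝ) R := fun u hu =>
    mem_closedBall_zero_iff.mpr (le_trans (hRx u hu) (le_max_right _ _))
  -- derivative of y
  have hf' : ∀ u ∈ Set.Ico (0:ℝ) t, HasDerivWithinAt y (v u (y u)) (Set.Ici u) u := by
    intro u hu
    have hI : HasDerivAt (fun r => ∫ s in (0:ℝ)..r, (y s) ^ 2) ((y u) ^ 2) u :=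
      ((hy_cont.pow 2).integral_hasStrictDerivAt 0 u).hasDerivAt
    have h1 : HasDerivAt (fun r : ℝ => x₀ - β * r) (-β) u := by
      simpa using ((hasDerivAt_id u).const_mul β).const_sub x₀
    have h2 : HasDerivAt (fun r => c * ∫ s in (0:ℝ)..r, (y s) ^ 2) (c * (y u) ^ 2) u :=
      hI.const_mul c
    have hF : HasDerivAt (fun r => x₀ - β * r - c * ∫ s in (0:ℝ)..r, (y s) ^ 2)
        (-β - c * (y u) ^ 2) u := h1.sub h2
    exact (hF.hasDerivWithinAt).congr
      (fun r hr => heq r (le_trans hu.1 hr)) (heq u hu.1)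
  have hg' : ∀ u ∈ Set.Ico (0:ℝ) t, HasDerivWithinAt x (v u (x u)) (Set.Ici u) u :=
    fun u hu => (hx' u hu.1).mono (Set.Ici_subset_Ici.mpr hu.1)
  have ha : y 0 = x 0 := by
    have := heq 0 (le_refl _)
    simp only [intervalIntegral.integral_same] at this
    rw [hx0]
    linarith
  exact ODE_solution_unique_of_mem_Icc_right (fun u _ => hv u) hy_cont.continuousOn hf'
    (fun u hu => hmemy u (Set.Ico_subset_Icc_self hu))
    hx_cont hg' (fun u hu => hmemx u (Set.Ico_subset_Icc_self hu)) ha ⟨ht, le_refl t⟩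

theorem skorokhod_problem_trivial_reflection (β θ x₀ : ℝ) (hβ : β ≤ 0) (hθ : 0 < θ)
    (hx₀ : 0 ≤ x₀) (y : ℝ → ℝ) (ψ : StieltjesFunction ℝ)
    (hy_cont : Continuous y) (hψ_cont : Continuous ψ)
    (hy_nonneg : ∀ t : ℝ, 0 ≤ t → 0 ≤ y t)
    (hψ0 : ψ 0 = 0)
    (heq : ∀ t : ℝ, 0 ≤ t →
      y t = x₀ - β * t - θ ^ 2 / 2 * (∫ s in (0 : ℝ)..t, (y s) ^ 2) + ψ t)
    (hflat : ∀ t : ℝ, 0 ≤ t →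
      ψ.measure {s | s ∈ Set.Icc (0 : ℝ) t ∧ 0 < y s} = 0) :
    (∀ t : ℝ, 0 ≤ t → ψ t = 0) ∧
      ∀ x : ℝ → ℝ,
        (x 0 = x₀ ∧
          ∀ t ∈ Set.Ici (0 : ℝ),
            HasDerivWithinAt x (-β - θ ^ 2 / 2 * (x t) ^ 2) (Set.Ici 0) t) →
        Set.EqOn y x (Set.Ici 0) := by
  have hz := psi_vanishes β θ x₀ hβ hθ hx₀ y ψ hy_cont hψ_cont hy_nonneg hψ0 heq hflat
  refine ⟨hz, ode_part β θ x₀ hθ y hy_cont ?_⟩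
  intro t ht
  have h1 := heq t ht
  rw [hz t ht] at h1
  linarith
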